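/- Let p be a trigonometric polynomial and φ̂ ∈ 𝓜(λ). Then p̂·φ̂ ∈ 𝓜(λ) and ∫_𝕋 p(w̄) M_{φ̂_w} dw = M_{p̂·φ̂}, where the integral is with respect to normalized Lebesgue measure on 𝕋 and is defined in the strong sense. -/

import Mathlib

open Filter Finset Classical

set_option linter.unusedVariables false
open scoped ComplexConjugate ENNReal

noncomputable section
attribute [local instance] Classical.propDecidable

/-- A countably infinite rooted directed tree, encoded by the parent function
(with the convention `par root = root`) and the depth function `|·|`. -/
structure DirTree (V : Type*) where
  root : V
  par : V → V
  depth : V → ℕ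
  par_root : par root = root
  depth_eq_zero : ∀ v, depth v = 0 ↔ v = root
  depth_par : ∀ v, v ≠ root → depth (par v) + 1 = depth v

variable {V : Type*}

/-- The tree is leafless: every vertex has a child. -/
def DirTree.Leafless (T : DirTree V) : Prop :=
  ∀ u : V, ∃ v : V, v ≠ T.root ∧ T.par v = u

/-- `wProd T lam v k = λ_{par^k(v)|v}`, the product of the weights along `k` steps up from `v`. -/
def wProd (T : DirTree V) (lam : V → ℂ) (v : V) (k : ℕ) : ℂ :=
  ∏ n ∈ Finset.range k, lam (T.par^[n] v)

/-- `(Γ_φ f)(v) = ∑_{k=0}^{|v|} λ_{par^k(v)|v} φ(k) f(par^k(v))`. -/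
def Gamma (T : DirTree V) (lam : V → ℂ) (φ : ℕ → ℂ) (f : V → ℂ) (v : V) : ℂ :=
  ∑ k ∈ Finset.range (T.depth v + 1), wProd T lam v k * φ k * f (T.par^[k] v)

/-- `S` is the weighted shift `S_λ` on `ℓ²(V)`. -/
def IsShift (T : DirTree V) (lam : V → ℝ)
    (S : lp (fun _ : V => ℂ) 2 →L[ℂ] lp (fun _ : V => ℂ) 2) : Prop :=
  ∀ f : lp (fun _ : V => ℂ) 2, ∀ v : V,
    S f v = if v = T.root then 0 else (lam v : ℂ) * f (T.par v)

/-- `M` is the (bounded, everywhere defined) multiplication operator `M_φ` with symbol `φ`;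
the existence of such an `M` is equivalent to `φ ∈ 𝓜(λ)`. -/
def IsMultOp (T : DirTree V) (lam : V → ℝ) (φ : ℕ → ℂ)
    (M : lp (fun _ : V => ℂ) 2 →L[ℂ] lp (fun _ : V => ℂ) 2) : Prop :=
  ∀ f : lp (fun _ : V => ℂ) 2, ∀ v : V,
    M f v = Gamma T (fun u => (lam u : ℂ)) φ (⇑f) v


lemma depth_iterate (T : DirTree V) :
    ∀ (k : ℕ) (v : V), k ≤ T.depth v → T.depth (T.par^[k] v) + k = T.depth v := by
  intro k
  induction k with
  | zero => intro v _; simp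
  | succ k ih =>
    intro v h
    have h1 : k ≤ T.depth v := by omega
    have h2 := ih v h1
    have hne : T.par^[k] v ≠ T.root := by
      intro he
      have : T.depth (T.par^[k] v) = 0 := by rw [(T.depth_eq_zero _)]; exact he
      omega
    have h3 := T.depth_par _ hne
    rw [Function.iterate_succ_apply']
    omega

lemma shift_pow (T : DirTree V) (lam : V → ℝ)
    (S : lp (fun _ : V => ℂ) 2 →L[ℂ] lp (fun _ : V => ℂ) 2) (hS : IsShift T lam S) :
    ∀ (k : ℕ) (f : lp (fun _ : V => ℂ) 2) (v : V),
      (S ^ k) f v = if k ≤ T.depth v then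
        wProd T (fun u => (lam u : ℂ)) v k * f (T.par^[k] v) else 0 := by
  intro k
  induction k with
  | zero =>
    intro f v
    simp [wProd]
  | succ k ih =>
    intro f v
    have hstep : (S ^ (k+1)) f = (S ^ k) (S f) := by
      rw [pow_succ]; rfl
    rw [hstep, ih (S f) v]
    by_cases h : k ≤ T.depth v
    · rw [if_pos h, hS f (T.par^[k] v)]
      by_cases h' : k + 1 ≤ T.depth v
      · have hne : T.par^[k] v ≠ T.root := by
          intro he
          have : T.depth (T.par^[k] v) = 0 := by rw [(T.depth_eq_zero _)]; exact he
          have := depth_iterate T k v h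
          omega
        rw [if_pos h', if_neg hne, Function.iterate_succ_apply']
        show wProd T (fun u => (lam u : ℂ)) v k * ((lam (T.par^[k] v) : ℂ) * f (T.par (T.par^[k] v))) = _
        rw [wProd, wProd, Finset.prod_range_succ]; ring
      · have hroot : T.par^[k] v = T.root := by
          have := depth_iterate T k v h
          have : T.depth (T.par^[k] v) = 0 := by omega
          exact (T.depth_eq_zero _).mp this
        rw [if_neg h', if_pos hroot, mul_zero]
    · rw [if_neg h, if_neg (by omega : ¬ k + 1 ≤ T.depth v)]

def evalCLM (v : V) : lp (fun _ : V => ℂ) 2 →L[ℂ] ℂ :=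
  LinearMap.mkContinuous
    { toFun := fun f => f v
      map_add' := fun f g => by
        show (↑(f + g) : ∀ _ : V, ℂ) v = _
        rw [lp.coeFn_add]; rfl
      map_smul' := fun c f => by
        show (↑(c • f) : ∀ _ : V, ℂ) v = _
        rw [lp.coeFn_smul]; rfl }
    1 (fun f => by
      simpa using lp.norm_apply_le_norm (by norm_num : (2 : ℝ≥0∞) ≠ 0) f v)

@[simp] lemma evalCLM_apply (v : V) (f : lp (fun _ : V => ℂ) 2) : evalCLM v f = f v := rfl

lemma multOp_poly (T : DirTree V) (lam : V → ℝ)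
    (S : lp (fun _ : V => ℂ) 2 →L[ℂ] lp (fun _ : V => ℂ) 2) (hS : IsShift T lam S)
    (ψ : ℕ → ℂ) (N : ℕ) (hψ : ∀ k, N + 1 ≤ k → ψ k = 0) :
    IsMultOp T lam ψ (∑ k ∈ Finset.range (N + 1), ψ k • S ^ k) := by
  intro f v
  have h1 : ((∑ k ∈ Finset.range (N + 1), ψ k • S ^ k) f : ∀ _ : V, ℂ) v
      = ∑ k ∈ Finset.range (N + 1), ψ k * ((S ^ k) f v) := by
    rw [ContinuousLinearMap.sum_apply]
    rw [lp.coeFn_sum]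
    rw [Finset.sum_apply]
    refine Finset.sum_congr rfl fun k _ => ?_
    rw [ContinuousLinearMap.smul_apply]
    show (↑(ψ k • ((S ^ k) f)) : ∀ _ : V, ℂ) v = _
    rw [lp.coeFn_smul]; rfl
  rw [h1]
  set d := T.depth v with hd
  set L := N + d + 1 with hL
  have e1 : ∑ k ∈ Finset.range (N + 1), ψ k * ((S ^ k) f v)
      = ∑ k ∈ Finset.range L, ψ k * ((S ^ k) f v) := by
    apply Finset.sum_subset
    · apply Finset.range_subset_range.mpr; omega
    · intro k _ hk
      have : N + 1 ≤ k := by simp only [Finset.mem_range] at hk ⊢; omega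
      rw [hψ k this, zero_mul]
  have e2 : ∑ k ∈ Finset.range L, ψ k * ((S ^ k) f v)
      = ∑ k ∈ Finset.range L, (if k ≤ d then
          wProd T (fun u => (lam u : ℂ)) v k * ψ k * f (T.par^[k] v) else 0) := by
    refine Finset.sum_congr rfl fun k _ => ?_
    rw [shift_pow T lam S hS k f v]
    by_cases h : k ≤ d
    · rw [if_pos h, if_pos h]; ring
    · rw [if_neg h, if_neg h, mul_zero]
  have e3 : ∑ k ∈ Finset.range L, (if k ≤ d then
          wProd T (fun u => (lam u : ℂ)) v k * ψ k * f (T.par^[k] v) else 0)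
      = ∑ k ∈ Finset.range (d + 1), wProd T (fun u => (lam u : ℂ)) v k * ψ k * f (T.par^[k] v) := by
    rw [← Finset.sum_subset (Finset.range_subset_range.mpr (by omega : d + 1 ≤ L))]
    · refine Finset.sum_congr rfl fun k hk => ?_
      rw [if_pos (by simp only [Finset.mem_range] at hk; omega : k ≤ d)]
    · intro k _ hk
      rw [if_neg (by simp only [Finset.mem_range] at hk; omega : ¬ k ≤ d)]
  rw [e1, e2, e3]; rfl

lemma lp_norm_eq_of_norm_eq {f g : lp (fun _ : V => ℂ) 2} (h : ∀ v, ‖f v‖ = ‖g v‖) :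
    ‖f‖ = ‖g‖ := by
  rw [lp.norm_eq_tsum_rpow (by norm_num) f, lp.norm_eq_tsum_rpow (by norm_num) g]
  congr 1
  exact tsum_congr fun v => by rw [h v]

def Del (T : DirTree V) (w : ℂ) (hw : ‖w‖ = 1) (f : lp (fun _ : V => ℂ) 2) :
    lp (fun _ : V => ℂ) 2 :=
  ⟨fun v => w ^ T.depth v * f v, by
    apply memℓp_gen
    have hs := (lp.memℓp f).summable (by norm_num : 0 < (2 : ℝ≥0∞).toReal)
    refine hs.congr fun v => ?_
    simp [norm_mul, norm_pow, hw]⟩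

@[simp] lemma Del_apply (T : DirTree V) (w : ℂ) (hw : ‖w‖ = 1) (f : lp (fun _ : V => ℂ) 2)
    (v : V) : Del T w hw f v = w ^ T.depth v * f v := rfl

lemma Del_norm (T : DirTree V) (w : ℂ) (hw : ‖w‖ = 1) (f : lp (fun _ : V => ℂ) 2) :
    ‖Del T w hw f‖ = ‖f‖ :=
  lp_norm_eq_of_norm_eq fun v => by simp [norm_mul, norm_pow, hw]

lemma norm_conj_one {w : ℂ} (hw : ‖w‖ = 1) : ‖(starRingEnd ℂ) w‖ = 1 := by
  rw [RCLike.norm_conj]; exact hw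

lemma Mfam_eq (T : DirTree V) (lam : V → ℝ) (φ : ℕ → ℂ)
    (M : lp (fun _ : V => ℂ) 2 →L[ℂ] lp (fun _ : V => ℂ) 2) (hM : IsMultOp T lam φ M)
    (Mw : lp (fun _ : V => ℂ) 2 →L[ℂ] lp (fun _ : V => ℂ) 2)
    (w : ℂ) (hw : ‖w‖ = 1) (hMw : IsMultOp T lam (fun n => w ^ n * φ n) Mw)
    (f : lp (fun _ : V => ℂ) 2) (v : V) :
    Mw f v = w ^ T.depth v * (M (Del T ((starRingEnd ℂ) w) (norm_conj_one hw) f)) v := by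
  rw [hMw f v, hM _ v]
  set g := Del T ((starRingEnd ℂ) w) (norm_conj_one hw) f with hg
  have hwc : w * (starRingEnd ℂ) w = 1 := by
    rw [Complex.mul_conj]
    have : Complex.normSq w = 1 := by
      have := Complex.sq_norm w
      have habs : ‖w‖ = 1 := hw
      rw [habs] at this
      simpa using this.symm
    rw [this]; norm_num
  rw [Gamma, Gamma, Finset.mul_sum]
  refine Finset.sum_congr rfl fun k hk => ?_
  have hk' : k ≤ T.depth v := by simp only [Finset.mem_range] at hk; omega
  have hdep : T.depth (T.par^[k] v) = T.depth v - k := by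
    have := depth_iterate T k v hk'
    omega
  have hgv : g (T.par^[k] v) = ((starRingEnd ℂ) w) ^ (T.depth v - k) * f (T.par^[k] v) := by
    rw [hg, Del_apply, hdep]
  rw [hgv]
  have hpow : w ^ T.depth v * ((starRingEnd ℂ) w) ^ (T.depth v - k) = w ^ k := by
    obtain ⟨m, hm⟩ : ∃ m, T.depth v = m + k := ⟨T.depth v - k, by omega⟩
    rw [hm, Nat.add_sub_cancel, pow_add, mul_comm (w ^ m) (w ^ k), mul_assoc, ← mul_pow, hwc,
      one_pow, mul_one]
  rw [← hpow]; ring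

lemma Mfam_norm_le (T : DirTree V) (lam : V → ℝ) (φ : ℕ → ℂ)
    (M : lp (fun _ : V => ℂ) 2 →L[ℂ] lp (fun _ : V => ℂ) 2) (hM : IsMultOp T lam φ M)
    (Mw : lp (fun _ : V => ℂ) 2 →L[ℂ] lp (fun _ : V => ℂ) 2)
    (w : ℂ) (hw : ‖w‖ = 1) (hMw : IsMultOp T lam (fun n => w ^ n * φ n) Mw)
    (f : lp (fun _ : V => ℂ) 2) :
    ‖Mw f‖ ≤ ‖M‖ * ‖f‖ := by
  have h1 : ‖Mw f‖ = ‖M (Del T ((starRingEnd ℂ) w) (norm_conj_one hw) f)‖ := by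
    apply lp_norm_eq_of_norm_eq
    intro v
    rw [Mfam_eq T lam φ M hM Mw w hw hMw f v]
    simp [norm_mul, norm_pow, hw]
  rw [h1]
  calc ‖M (Del T ((starRingEnd ℂ) w) (norm_conj_one hw) f)‖
      ≤ ‖M‖ * ‖Del T ((starRingEnd ℂ) w) (norm_conj_one hw) f‖ := M.le_opNorm _
    _ = ‖M‖ * ‖f‖ := by rw [Del_norm]

lemma integral_exp_int (m : ℤ) :
    (∫ θ in (0:ℝ)..(2*Real.pi), Complex.exp (m * θ * Complex.I))
      = if m = 0 then ((2*Real.pi : ℝ) : ℂ) else 0 := by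
  by_cases hm : m = 0
  · rw [if_pos hm]
    simp only [hm, Int.cast_zero, zero_mul, Complex.exp_zero]
    rw [intervalIntegral.integral_const]
    simp
  · rw [if_neg hm]
    have hc : (m : ℂ) * Complex.I ≠ 0 := by
      simp [Complex.I_ne_zero, hm]
    have h1 : ∀ θ : ℝ, Complex.exp (m * θ * Complex.I)
        = Complex.exp (((m : ℂ) * Complex.I) * θ) := by
      intro θ; ring_nf
    simp only [h1]
    rw [integral_exp_mul_complex hc]
    have h2 : (m : ℂ) * Complex.I * ((2*Real.pi : ℝ) : ℂ) = (m : ℂ) * (2 * Real.pi * Complex.I) := by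
      push_cast; ring
    have h3 : Complex.exp ((m : ℂ) * Complex.I * ((2*Real.pi : ℝ) : ℂ)) = 1 := by
      rw [h2, Complex.exp_int_mul_two_pi_mul_I]
    rw [h3]
    simp

lemma conj_exp_theta (θ : ℝ) :
    (starRingEnd ℂ) (Complex.exp (θ * Complex.I)) = Complex.exp (-(θ : ℂ) * Complex.I) := by
  rw [← Complex.exp_conj]
  congr 1
  simp [Complex.conj_I]

lemma norm_exp_theta (θ : ℝ) : ‖Complex.exp ((θ:ℂ) * Complex.I)‖ = 1 := by
  exact Complex.norm_exp_ofReal_mul_I θ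

lemma cont_exp_mul (m : ℂ) : Continuous (fun θ : ℝ => Complex.exp (m * θ * Complex.I)) := by
  fun_prop

lemma key_scalar (N : ℕ) (c : ℤ → ℂ)
    (p : ℂ → ℂ) (hp : ∀ z : ℂ, z ≠ 0 → p z = ∑ j ∈ Finset.Icc (-(N : ℤ)) (N : ℤ), c j * z ^ j)
    (phat : ℕ → ℂ) (hphat : ∀ k : ℕ, phat k = if (k : ℤ) ≤ (N : ℤ) then c (k : ℤ) else 0)
    (k : ℕ) :
    (∫ θ in (0:ℝ)..(2*Real.pi),
        p ((starRingEnd ℂ) (Complex.exp ((θ:ℂ) * Complex.I)))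
          * Complex.exp ((θ:ℂ) * Complex.I) ^ k)
      = ((2*Real.pi : ℝ) : ℂ) * phat k := by
  have hint : ∀ θ : ℝ,
      p ((starRingEnd ℂ) (Complex.exp ((θ:ℂ) * Complex.I))) * Complex.exp ((θ:ℂ)*Complex.I) ^ k
      = ∑ j ∈ Finset.Icc (-(N:ℤ)) (N:ℤ),
          c j * Complex.exp ((((k:ℤ) - j : ℤ) : ℂ) * θ * Complex.I) := by
    intro θ
    rw [conj_exp_theta, hp _ (Complex.exp_ne_zero _), Finset.sum_mul]
    refine Finset.sum_congr rfl fun j hj => ?_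
    rw [mul_assoc]
    congr 1
    calc Complex.exp (-(θ:ℂ)*Complex.I) ^ j * Complex.exp ((θ:ℂ)*Complex.I) ^ k
        = Complex.exp ((j:ℂ) * (-(θ:ℂ)*Complex.I)) * Complex.exp ((k:ℂ) * ((θ:ℂ)*Complex.I)) := by
          rw [Complex.exp_int_mul, Complex.exp_nat_mul]
      _ = Complex.exp ((((k:ℤ) - j : ℤ) : ℂ) * θ * Complex.I) := by
          rw [← Complex.exp_add]; congr 1; push_cast; ring
  rw [intervalIntegral.integral_congr (g := fun θ => ∑ j ∈ Finset.Icc (-(N:ℤ)) (N:ℤ),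
      c j * Complex.exp ((((k:ℤ) - j : ℤ) : ℂ) * θ * Complex.I)) (fun θ _ => hint θ)]
  rw [intervalIntegral.integral_finset_sum (f := fun j θ => c j * Complex.exp ((((k:ℤ) - j : ℤ) : ℂ) * θ * Complex.I)) (fun j _ =>
    (Continuous.intervalIntegrable (continuous_const.mul (cont_exp_mul _)) _ _))]
  have step : ∀ j ∈ Finset.Icc (-(N:ℤ)) (N:ℤ),
      (∫ θ in (0:ℝ)..(2*Real.pi), c j * Complex.exp ((((k:ℤ) - j : ℤ) : ℂ) * θ * Complex.I))
      = if j = (k:ℤ) then c j * ((2*Real.pi : ℝ) : ℂ) else 0 := by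
    intro j _
    rw [intervalIntegral.integral_const_mul, integral_exp_int ((k:ℤ) - j)]
    by_cases h : j = (k:ℤ)
    · rw [if_pos h, if_pos (by omega : (k:ℤ) - j = 0)]
    · rw [if_neg h, if_neg (by omega : ¬ ((k:ℤ) - j = 0)), mul_zero]
  rw [Finset.sum_congr rfl step, Finset.sum_ite_eq' (Finset.Icc (-(N:ℤ)) (N:ℤ)) ((k:ℤ))
    (fun j => c j * ((2*Real.pi : ℝ) : ℂ))]
  rw [hphat k]
  by_cases hk : (k:ℤ) ≤ (N:ℤ)
  · rw [if_pos (Finset.mem_Icc.mpr ⟨by omega, hk⟩), if_pos hk]; ring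
  · rw [if_neg (fun hmem => hk (Finset.mem_Icc.mp hmem).2), if_neg hk, mul_zero]

/-- Proposition: for a trigonometric polynomial
`p(z) = ∑_{k=-N}^N c_k z^k` and `φ ∈ 𝓜(λ)`, one has `p̂·φ ∈ 𝓜(λ)` and
`∫_𝕋 p(w̄) M_{φ_w} dw = M_{p̂·φ}` (normalized Lebesgue measure, integral in the strong sense). -/
theorem stmt2 [Countable V] [Infinite V] (T : DirTree V) (hTl : T.Leafless)
    (lam : V → ℝ) (hlam : ∀ v, v ≠ T.root → 0 < lam v)
    (S : lp (fun _ : V => ℂ) 2 →L[ℂ] lp (fun _ : V => ℂ) 2) (hS : IsShift T lam S)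
    (φ : ℕ → ℂ)
    (M : lp (fun _ : V => ℂ) 2 →L[ℂ] lp (fun _ : V => ℂ) 2) (hM : IsMultOp T lam φ M)
    (Mfam : ℂ → (lp (fun _ : V => ℂ) 2 →L[ℂ] lp (fun _ : V => ℂ) 2))
    (hMfam : ∀ w : ℂ, ‖w‖ = 1 → IsMultOp T lam (fun n => w ^ n * φ n) (Mfam w))
    (N : ℕ) (c : ℤ → ℂ)
    (p : ℂ → ℂ) (hp : ∀ z : ℂ, z ≠ 0 → p z = ∑ k ∈ Finset.Icc (-(N : ℤ)) (N : ℤ), c k * z ^ k)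
    (phat : ℕ → ℂ) (hphat : ∀ k : ℕ, phat k = if (k : ℤ) ≤ (N : ℤ) then c (k : ℤ) else 0) :
    ∃ Mp : lp (fun _ : V => ℂ) 2 →L[ℂ] lp (fun _ : V => ℂ) 2,
      IsMultOp T lam (fun k => phat k * φ k) Mp ∧
      ∀ f : lp (fun _ : V => ℂ) 2,
        (2 * Real.pi)⁻¹ •
            ∫ θ in (0:ℝ)..(2 * Real.pi),
              p (starRingEnd ℂ (Complex.exp (θ * Complex.I))) •
                Mfam (Complex.exp (θ * Complex.I)) f = Mp f := by
  classical
  set lamC : V → ℂ := fun u => (lam u : ℂ) with hlamC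
  set ψ : ℕ → ℂ := fun k => phat k * φ k with hψdef
  have hψ0 : ∀ k, N + 1 ≤ k → ψ k = 0 := by
    intro k hk
    have hk' : ¬ ((k : ℤ) ≤ (N : ℤ)) := by omega
    simp only [hψdef, hphat k, if_neg hk', zero_mul]
  refine ⟨∑ k ∈ Finset.range (N + 1), ψ k • S ^ k, multOp_poly T lam S hS ψ N hψ0, ?_⟩
  intro f
  set Mp : lp (fun _ : V => ℂ) 2 →L[ℂ] lp (fun _ : V => ℂ) 2 :=
    ∑ k ∈ Finset.range (N + 1), ψ k • S ^ k with hMp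
  set F : ℝ → lp (fun _ : V => ℂ) 2 := fun θ =>
    p ((starRingEnd ℂ) (Complex.exp (θ * Complex.I))) •
      Mfam (Complex.exp (θ * Complex.I)) f with hF
  have hw1 : ∀ θ : ℝ, ‖Complex.exp ((θ:ℂ) * Complex.I)‖ = 1 := norm_exp_theta
  -- coordinates of F
  have hFcoord : ∀ (θ : ℝ) (v : V), (F θ : ∀ _ : V, ℂ) v =
      p ((starRingEnd ℂ) (Complex.exp ((θ:ℂ) * Complex.I))) *
        ∑ k ∈ Finset.range (T.depth v + 1), wProd T lamC v k *
          (Complex.exp ((θ:ℂ) * Complex.I) ^ k * φ k) * f (T.par^[k] v) := by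
    intro θ v
    have h1 : (F θ : ∀ _ : V, ℂ) v =
        p ((starRingEnd ℂ) (Complex.exp ((θ:ℂ) * Complex.I))) *
          (Mfam (Complex.exp ((θ:ℂ) * Complex.I)) f v) := by
      rw [hF]
      show (↑(p ((starRingEnd ℂ) (Complex.exp ((θ:ℂ) * Complex.I))) •
        Mfam (Complex.exp ((θ:ℂ) * Complex.I)) f) : ∀ _ : V, ℂ) v = _
      rw [lp.coeFn_smul]; rfl
    rw [h1, hMfam _ (hw1 θ) f v, Gamma]
  -- continuity of the p-factor
  have hcont1 : Continuous fun θ : ℝ =>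
      p ((starRingEnd ℂ) (Complex.exp ((θ:ℂ) * Complex.I))) := by
    have h : (fun θ : ℝ => p ((starRingEnd ℂ) (Complex.exp ((θ:ℂ) * Complex.I)))) =
        fun θ : ℝ => ∑ j ∈ Finset.Icc (-(N:ℤ)) (N:ℤ),
          c j * Complex.exp (((-j : ℤ) : ℂ) * θ * Complex.I) := by
      funext θ
      rw [conj_exp_theta, hp _ (Complex.exp_ne_zero _)]
      refine Finset.sum_congr rfl fun j _ => ?_
      congr 1
      rw [← Complex.exp_int_mul]
      congr 1; push_cast; ring
    rw [h]
    exact continuous_finset_sum _ fun j _ => continuous_const.mul (cont_exp_mul _)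
  have hexp : Continuous fun θ : ℝ => Complex.exp ((θ:ℂ) * Complex.I) := by fun_prop
  have hFcont : ∀ v : V, Continuous fun θ : ℝ => (F θ : ∀ _ : V, ℂ) v := by
    intro v
    have h : (fun θ : ℝ => (F θ : ∀ _ : V, ℂ) v) =
        fun θ : ℝ => p ((starRingEnd ℂ) (Complex.exp ((θ:ℂ) * Complex.I))) *
          ∑ k ∈ Finset.range (T.depth v + 1), wProd T lamC v k *
            (Complex.exp ((θ:ℂ) * Complex.I) ^ k * φ k) * f (T.par^[k] v) :=
      funext fun θ => hFcoord θ v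
    rw [h]
    exact hcont1.mul (continuous_finset_sum _ fun k _ =>
      (continuous_const.mul ((hexp.pow k).mul continuous_const)).mul continuous_const)
  -- strong measurability of F
  obtain ⟨D⟩ := nonempty_denumerable V
  set e : V ≃ ℕ := @Denumerable.eqv V D with he
  have hGcont : ∀ n : ℕ, Continuous fun θ : ℝ =>
      ∑ i ∈ Finset.range n, (F θ : ∀ _ : V, ℂ) (e.symm i) • lp.single (E := fun _ : V => ℂ) 2 (e.symm i) (1:ℂ) :=
    fun n => continuous_finset_sum _ fun i _ => (hFcont (e.symm i)).smul continuous_const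
  have htend : ∀ θ : ℝ, Tendsto (fun n : ℕ =>
      ∑ i ∈ Finset.range n, (F θ : ∀ _ : V, ℂ) (e.symm i) • lp.single (E := fun _ : V => ℂ) 2 (e.symm i) (1:ℂ))
      atTop (nhds (F θ)) := by
    intro θ
    have h1 := lp.hasSum_single (by norm_num : (2:ℝ≥0∞) ≠ ⊤) (F θ)
    have h2 := (Equiv.hasSum_iff e.symm).mpr h1
    have h3 := h2.tendsto_sum_nat
    refine h3.congr fun n => Finset.sum_congr rfl fun i _ => ?_
    show lp.single (E := fun _ : V => ℂ) 2 (e.symm i) ((F θ : ∀ _ : V, ℂ) (e.symm i)) = _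
    rw [show (F θ : ∀ _ : V, ℂ) (e.symm i) • lp.single (E := fun _ : V => ℂ) 2 (e.symm i) (1:ℂ)
        = lp.single (E := fun _ : V => ℂ) 2 (e.symm i) ((F θ : ∀ _ : V, ℂ) (e.symm i) • (1:ℂ)) from
      (lp.single_smul (E := fun _ : V => ℂ) 2 (e.symm i) ((F θ : ∀ _ : V, ℂ) (e.symm i)) (1:ℂ)).symm,
      smul_eq_mul, mul_one]
  have hSM : MeasureTheory.StronglyMeasurable F :=
    stronglyMeasurable_of_tendsto atTop (fun n => (hGcont n).stronglyMeasurable)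
      (tendsto_pi_nhds.mpr htend)
  -- norm bound
  set C : ℝ := ∑ j ∈ Finset.Icc (-(N:ℤ)) (N:ℤ), ‖c j‖ with hC
  have hCnn : 0 ≤ C := Finset.sum_nonneg fun j _ => norm_nonneg _
  have hpnorm : ∀ θ : ℝ, ‖p ((starRingEnd ℂ) (Complex.exp ((θ:ℂ) * Complex.I)))‖ ≤ C := by
    intro θ
    rw [conj_exp_theta, hp _ (Complex.exp_ne_zero _)]
    refine (norm_sum_le _ _).trans ?_
    refine Finset.sum_le_sum fun j _ => ?_
    rw [norm_mul, norm_zpow]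
    have : ‖Complex.exp (-(θ:ℂ) * Complex.I)‖ = 1 := by
      have := norm_exp_theta (-θ)
      rw [show ((-θ : ℝ) : ℂ) = -(θ:ℂ) by push_cast; ring] at this
      exact this
    rw [this, one_zpow, mul_one]
  have hFnorm : ∀ θ : ℝ, ‖F θ‖ ≤ C * (‖M‖ * ‖f‖) := by
    intro θ
    rw [hF]
    show ‖p ((starRingEnd ℂ) (Complex.exp ((θ:ℂ) * Complex.I))) •
      Mfam (Complex.exp ((θ:ℂ) * Complex.I)) f‖ ≤ _
    rw [norm_smul]
    exact mul_le_mul (hpnorm θ)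
      (Mfam_norm_le T lam φ M hM (Mfam _) _ (hw1 θ) (hMfam _ (hw1 θ)) f)
      (norm_nonneg _) hCnn
  have hInt : IntervalIntegrable F MeasureTheory.volume 0 (2 * Real.pi) := by
    rw [intervalIntegrable_iff]
    haveI : MeasureTheory.IsFiniteMeasure
        (MeasureTheory.volume.restrict (Set.uIoc (0:ℝ) (2 * Real.pi))) := by
      constructor
      rw [MeasureTheory.Measure.restrict_apply_univ]
      exact measure_Ioc_lt_top
    exact (MeasureTheory.integrable_const (C * (‖M‖ * ‖f‖))).mono'
      hSM.aestronglyMeasurable.restrict (MeasureTheory.ae_of_all _ hFnorm)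
  -- conclude coordinatewise
  apply lp.ext
  funext v
  have hLsmul : (↑((2 * Real.pi)⁻¹ • ∫ θ in (0:ℝ)..(2 * Real.pi), F θ) : ∀ _ : V, ℂ) v
      = (2 * Real.pi)⁻¹ • ((↑(∫ θ in (0:ℝ)..(2 * Real.pi), F θ) : ∀ _ : V, ℂ) v) := by
    rw [lp.coeFn_smul]; rfl
  have hIv : (↑(∫ θ in (0:ℝ)..(2 * Real.pi), F θ) : ∀ _ : V, ℂ) v
      = ∫ θ in (0:ℝ)..(2 * Real.pi), (F θ : ∀ _ : V, ℂ) v := by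
    have := (evalCLM v).intervalIntegral_comp_comm hInt
    exact this.symm
  have hsum : (fun θ : ℝ => (F θ : ∀ _ : V, ℂ) v) = fun θ : ℝ =>
      ∑ k ∈ Finset.range (T.depth v + 1),
        (wProd T lamC v k * φ k * f (T.par^[k] v)) *
          (p ((starRingEnd ℂ) (Complex.exp ((θ:ℂ) * Complex.I))) *
            Complex.exp ((θ:ℂ) * Complex.I) ^ k) := by
    funext θ
    rw [hFcoord θ v, Finset.mul_sum]
    exact Finset.sum_congr rfl fun k _ => by ring
  have hIv2 : (∫ θ in (0:ℝ)..(2 * Real.pi), (F θ : ∀ _ : V, ℂ) v)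
      = ∑ k ∈ Finset.range (T.depth v + 1),
          (wProd T lamC v k * φ k * f (T.par^[k] v)) * (((2*Real.pi : ℝ) : ℂ) * phat k) := by
    rw [hsum, intervalIntegral.integral_finset_sum (f := fun k θ => (wProd T lamC v k * φ k * f (T.par^[k] v)) *
        (p ((starRingEnd ℂ) (Complex.exp ((θ:ℂ) * Complex.I))) * Complex.exp ((θ:ℂ) * Complex.I) ^ k)) (fun k _ =>
      Continuous.intervalIntegrable
        (continuous_const.mul (hcont1.mul (hexp.pow k))) _ _)]
    refine Finset.sum_congr rfl fun k _ => ?_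
    rw [intervalIntegral.integral_const_mul, key_scalar N c p hp phat hphat k]
  have hMpv : (Mp f : ∀ _ : V, ℂ) v = Gamma T lamC ψ (⇑f) v :=
    multOp_poly T lam S hS ψ N hψ0 f v
  rw [hLsmul, hIv, hIv2, hMpv, Gamma]
  have hpull : ∑ k ∈ Finset.range (T.depth v + 1),
      (wProd T lamC v k * φ k * f (T.par^[k] v)) * (((2*Real.pi : ℝ) : ℂ) * phat k)
      = ((2*Real.pi : ℝ) : ℂ) * ∑ k ∈ Finset.range (T.depth v + 1),
          wProd T lamC v k * ψ k * f (T.par^[k] v) := by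
    rw [Finset.mul_sum]
    refine Finset.sum_congr rfl fun k _ => ?_
    simp only [hψdef]; ring
  rw [hpull, Complex.real_smul, ← mul_assoc]
  have h2π : (2 * Real.pi : ℝ) ≠ 0 := by positivity
  rw [show (((2 * Real.pi)⁻¹ : ℝ) : ℂ) * ((2*Real.pi : ℝ) : ℂ) = 1 by
    rw [← Complex.ofReal_mul, inv_mul_cancel₀ h2π, Complex.ofReal_one], one_mul]
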